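/- Let Y be a Banach space, C ⊂ Y closed convex, f : C × C → Y L-Lipschitz satisfying: for every R > 0 there is θ > 0 such that c, c' ∈ C with ‖c‖, ‖c'‖ ≤ R implies c + θ f(c, c') ∈ C. Let Λ : [0,T] → P(C) be continuous with Λ_t supported in a fixed ball B_R̄(0) for all t. Then for every R > 0 there exists θ > 0 such that, for all y ∈ C with ‖y‖ ≤ R and all t ∈ [0,T], y + θ b_Λ(t, y) ∈ C, where b_Λ(t,y) = ∫ f(y,y') dΛ_t(y'). -/

import Mathlib

open MeasureTheory

/-- Invariance of the closed convex set `C` under the averaged field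
`b_Λ(t,y) = ∫ f(y,y') dΛ_t(y')`: if `f` satisfies the subtangential compatibility
condition on `C` and the measures `Λ_t` are probability measures supported in
`C ∩ B_R̄(0)`, then for every `R > 0` there is `θ > 0` with
`y + θ b_Λ(t,y) ∈ C` whenever `y ∈ C`, `‖y‖ ≤ R`, `t ∈ [0,T]`. -/
theorem stmt12 {Y : Type*} [NormedAddCommGroup Y] [NormedSpace ℝ Y]
    [CompleteSpace Y] [MeasurableSpace Y] [BorelSpace Y]
    (C : Set Y) (hC : IsClosed C) (hconv : Convex ℝ C)
    (T L : ℝ) (hL : 0 ≤ L) (hT : 0 ≤ T)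
    (f : Y → Y → Y)
    (hf : ∀ y₁ ∈ C, ∀ y₂ ∈ C, ∀ y₁' ∈ C, ∀ y₂' ∈ C,
      ‖f y₁ y₂ - f y₁' y₂'‖ ≤ L * (‖y₁ - y₁'‖ + ‖y₂ - y₂'‖))
    (hcompat : ∀ R > (0 : ℝ), ∃ θ > (0 : ℝ), ∀ c ∈ C, ∀ c' ∈ C,
      ‖c‖ ≤ R → ‖c'‖ ≤ R → c + θ • f c c' ∈ C)
    (Λ : ℝ → Measure Y)
    (hΛp : ∀ t ∈ Set.Icc 0 T, IsProbabilityMeasure (Λ t))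
    (Rbar : ℝ)
    (hsupp : ∀ t ∈ Set.Icc 0 T, Λ t (C ∩ Metric.closedBall 0 Rbar) = 1) :
    ∀ R > (0 : ℝ), ∃ θ > (0 : ℝ), ∀ t ∈ Set.Icc 0 T, ∀ y ∈ C, ‖y‖ ≤ R →
      y + θ • (∫ y', f y y' ∂Λ t) ∈ C := by
  intro R hR
  set R' : ℝ := max R Rbar with hR'def
  obtain ⟨θ, hθ, hθmem⟩ := hcompat R' (lt_of_lt_of_le hR (le_max_left _ _))
  refine ⟨θ, hθ, ?_⟩
  intro t ht y hy hyR
  haveI := hΛp t ht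
  set μ := Λ t with hμ
  by_cases hI : Integrable (fun y' => f y y') μ
  · -- the integrable case: use convexity and closedness of C
    set S : Set Y := C ∩ Metric.closedBall 0 Rbar with hSdef
    have hSmeas : MeasurableSet S :=
      (hC.measurableSet).inter Metric.isClosed_closedBall.measurableSet
    have hμS : μ S = 1 := hsupp t ht
    have hae : ∀ᵐ y' ∂μ, y' ∈ S := by
      have hcompl : μ Sᶜ = 0 := by
        rw [measure_compl hSmeas (measure_ne_top μ S), hμS, measure_univ]
        simp
      rw [ae_iff]
      exact hcompl
    have hmem : ∀ᵐ y' ∂μ, y + θ • f y y' ∈ C := by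
      filter_upwards [hae] with y' hy'
      obtain ⟨hy'C, hy'b⟩ := hy'
      have hb : ‖y'‖ ≤ R' := by
        have : ‖y'‖ ≤ Rbar := by
          simpa [Metric.mem_closedBall, dist_eq_norm] using hy'b
        exact this.trans (le_max_right _ _)
      exact hθmem y hy y' hy'C (hyR.trans (le_max_left _ _)) hb
    have hint : Integrable (fun y' => y + θ • f y y') μ :=
      (integrable_const y).add (hI.smul θ)
    have key : (∫ y', (y + θ • f y y') ∂μ) ∈ C :=
      hconv.integral_mem hC hmem hint
    have heq : (∫ y', (y + θ • f y y') ∂μ) = y + θ • (∫ y', f y y' ∂μ) := by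
      have h1 : (∫ y', (y + θ • f y y') ∂μ)
          = (∫ _, y ∂μ) + ∫ y', θ • f y y' ∂μ :=
        integral_add (integrable_const y) (hI.smul θ)
      rw [h1, integral_const, integral_smul, probReal_univ]
      simp
    rwa [heq] at key
  · -- not integrable: the integral is zero by convention and `y ∈ C`
    rw [integral_undef hI, smul_zero, add_zero]
    exact hy
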